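/- Let z₁, z₂, z₃ be pairwise distinct complex numbers. If j(z₁, z₂, z₃) is not real, then the three side lengths |z₁−z₂|, |z₂−z₃|, |z₃−z₁| are pairwise distinct; i.e., the points form a triangle whose side lengths are pairwise different. -/

import Mathlib

open Complex

/-- The j-invariant as a function of the cross-ratio. -/
noncomputable def Jfun (l : ℂ) : ℂ := 4 * (l ^ 2 - l + 1) ^ 3 / (27 * l ^ 2 * (l - 1) ^ 2)

lemma denom_ne (l : ℂ) (h0 : l ≠ 0) (h1 : l ≠ 1) : 27 * l ^ 2 * (l - 1) ^ 2 ≠ 0 :=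
  mul_ne_zero (mul_ne_zero (by norm_num) (pow_ne_zero _ h0))
    (pow_ne_zero _ (sub_ne_zero.mpr h1))

lemma Jfun_conj (l : ℂ) : Jfun (starRingEnd ℂ l) = starRingEnd ℂ (Jfun l) := by
  simp [Jfun, map_div₀, map_mul, map_pow, map_sub, map_add, map_one, map_ofNat]

lemma im_zero_of_conj_fix (l : ℂ) (h : Jfun (starRingEnd ℂ l) = Jfun l) : (Jfun l).im = 0 := by
  have hc := Jfun_conj l
  rw [h] at hc
  exact Complex.conj_eq_iff_im.mp hc.symm

lemma case_half (l : ℂ) (h : starRingEnd ℂ l = 1 - l) : (Jfun l).im = 0 := by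
  apply im_zero_of_conj_fix
  rw [h, Jfun, Jfun]
  congr 1 <;> ring

lemma case_unit (l : ℂ) (h0 : l ≠ 0) (h1 : l ≠ 1) (h : starRingEnd ℂ l = l⁻¹) :
    (Jfun l).im = 0 := by
  apply im_zero_of_conj_fix
  rw [h, Jfun, Jfun, div_eq_div_iff]
  · field_simp
    ring
  · exact denom_ne _ (inv_ne_zero h0) (fun he => h1 (by rwa [inv_eq_one] at he))
  · exact denom_ne _ h0 h1

lemma case_third (l : ℂ) (h0 : l ≠ 0) (h1 : l ≠ 1) (h : starRingEnd ℂ l = l / (l - 1)) :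
    (Jfun l).im = 0 := by
  have hs : l - 1 ≠ 0 := sub_ne_zero.mpr h1
  apply im_zero_of_conj_fix
  rw [h, Jfun, Jfun, div_eq_div_iff]
  · field_simp
    ring
  · refine denom_ne _ (div_ne_zero h0 hs) (fun he => ?_)
    rw [div_eq_one_iff_eq hs] at he
    exact one_ne_zero (α := ℂ) (by linear_combination he)
  · exact denom_ne _ h0 h1

theorem sides_aux (z1 z2 z3 : ℂ)
    (h12 : z1 ≠ z2) (h13 : z1 ≠ z3) (h23 : z2 ≠ z3)
    (him : (Jfun ((z1 - z3) / (z2 - z3))).im ≠ 0) :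
    ‖z1 - z2‖ ≠ ‖z2 - z3‖ ∧
    ‖z2 - z3‖ ≠ ‖z3 - z1‖ ∧
    ‖z3 - z1‖ ≠ ‖z1 - z2‖ := by
  set w := z2 - z3 with hw
  have hw0 : w ≠ 0 := sub_ne_zero.mpr h23
  set l := (z1 - z3) / w with hl
  have hlw : l * w = z1 - z3 := div_mul_cancel₀ _ hw0
  have hl0 : l ≠ 0 := div_ne_zero (sub_ne_zero.mpr h13) hw0
  have hl1 : l ≠ 1 := by
    intro he
    apply h12
    have : z1 - z3 = w := by rw [← hlw, he, one_mul]
    rw [hw] at this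
    linear_combination this
  have haw : ‖w‖ ≠ 0 := norm_ne_zero_iff.mpr hw0
  have h12w : z1 - z2 = (l - 1) * w := by rw [sub_mul, one_mul, hlw, hw]; ring
  have h31w : z3 - z1 = -(l * w) := by rw [hlw]; ring
  refine ⟨fun h => him ?_, fun h => him ?_, fun h => him ?_⟩
  · -- |z1-z2| = |z2-z3| : |l-1| = 1
    rw [h12w, norm_mul] at h
    have h1 : ‖l - 1‖ = 1 := by
      field_simp at h; exact h
    have hm : (l - 1) * starRingEnd ℂ (l - 1) = 1 := by
      rw [Complex.mul_conj]
      norm_cast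
      rw [← Complex.sq_norm, h1]; norm_num
    apply case_third l hl0 hl1
    have hs : l - 1 ≠ 0 := sub_ne_zero.mpr hl1
    rw [map_sub, map_one] at hm
    field_simp
    linear_combination hm
  · -- |z2-z3| = |z3-z1| : |l| = 1
    rw [h31w, norm_neg, norm_mul] at h
    have h1 : ‖l‖ = 1 := by
      field_simp at h
      linarith [h]
    have hm : l * starRingEnd ℂ l = 1 := by
      rw [Complex.mul_conj]; norm_cast
      rw [← Complex.sq_norm, h1]; norm_num
    exact case_unit l hl0 hl1 (eq_inv_of_mul_eq_one_left (by rwa [mul_comm] at hm))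
  · -- |z3-z1| = |z1-z2| : |l| = |l-1|
    rw [h31w, h12w, norm_neg, norm_mul, norm_mul] at h
    have h1 : ‖l‖ = ‖l - 1‖ :=
      mul_right_cancel₀ haw h
    have hm : l * starRingEnd ℂ l = (l - 1) * starRingEnd ℂ (l - 1) := by
      rw [Complex.mul_conj, Complex.mul_conj]
      norm_cast
      rw [← Complex.sq_norm, ← Complex.sq_norm, h1]
    apply case_half
    rw [map_sub, map_one] at hm
    linear_combination hm

/-- The cross-ratio of four points of `ℂ`. -/
noncomputable def crossRatio (z1 z2 z3 z4 : ℂ) : ℂ :=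
  ((z1 - z3) / (z2 - z3)) * ((z2 - z4) / (z1 - z4))

/-- The j-invariant of a quadruple of points of `ℂ`. -/
noncomputable def jInv4 (z1 z2 z3 z4 : ℂ) : ℂ := Jfun (crossRatio z1 z2 z3 z4)

/-- The j-invariant of a triple of points of `ℂ` (fourth point at infinity). -/
noncomputable def jInv3 (z1 z2 z3 : ℂ) : ℂ := Jfun ((z1 - z3) / (z2 - z3))

theorem sides_pairwise_distinct_of_jInv3_not_real (z1 z2 z3 : ℂ)
    (h12 : z1 ≠ z2) (h13 : z1 ≠ z3) (h23 : z2 ≠ z3)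
    (him : (jInv3 z1 z2 z3).im ≠ 0) :
    ‖z1 - z2‖ ≠ ‖z2 - z3‖ ∧
    ‖z2 - z3‖ ≠ ‖z3 - z1‖ ∧
    ‖z3 - z1‖ ≠ ‖z1 - z2‖ :=
  sides_aux z1 z2 z3 h12 h13 h23 him
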